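/- Let N, S : ℝ → ℝ be differentiable real functions of η satisfying S(η)·S'(η)·N(η)² = 1 for all η, and define z(t, ξ, η) = S(η)·exp(i·(N(η)·t − N(η)²·ξ)). Then z satisfies z_ξ = i·z_tt and (i/2)·(z_ξ·conj(z_η) − conj(z_ξ)·z_η) = 1. -/

import Mathlib

/-- partial derivative in `t` -/
noncomputable def pt (f : ℝ → ℝ → ℝ → ℂ) : ℝ → ℝ → ℝ → ℂ :=
  fun t ξ η => deriv (fun s => f s ξ η) t

/-- partial derivative in `ξ` -/
noncomputable def px (f : ℝ → ℝ → ℝ → ℂ) : ℝ → ℝ → ℝ → ℂ :=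
  fun t ξ η => deriv (fun s => f t s η) ξ

/-- partial derivative in `η` -/
noncomputable def pe (f : ℝ → ℝ → ℝ → ℂ) : ℝ → ℝ → ℝ → ℂ :=
  fun t ξ η => deriv (fun s => f t ξ s) η

open Complex

theorem solution_system_B (N S : ℝ → ℝ)
    (hN : Differentiable ℝ N) (hS : Differentiable ℝ S)
    (hcon : ∀ η, S η * deriv S η * (N η) ^ 2 = 1) :
    let z : ℝ → ℝ → ℝ → ℂ := fun t ξ η =>
      (S η : ℂ) * Complex.exp (Complex.I * ((N η : ℂ) * t - (N η : ℂ) ^ 2 * ξ))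
    ∀ t ξ η,
      px z t ξ η = Complex.I * pt (pt z) t ξ η ∧
      (Complex.I / 2) * (px z t ξ η * starRingEnd ℂ (pe z t ξ η)
        - starRingEnd ℂ (px z t ξ η) * pe z t ξ η) = 1 := by
  intro z t ξ η
  have hpt : pt z = fun t ξ η => (S η : ℂ) * (Complex.I * (N η : ℂ)) *
      Complex.exp (Complex.I * ((N η : ℂ) * (t:ℝ) - (N η : ℂ) ^ 2 * (ξ:ℝ))) := by
    funext t ξ η
    have h : HasDerivAt (fun s : ℝ => (S η : ℂ) * Complex.exp (Complex.I * ((N η : ℂ) * s - (N η : ℂ) ^ 2 * ξ)))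
        ((S η : ℂ) * (Complex.exp (Complex.I * ((N η : ℂ) * t - (N η : ℂ) ^ 2 * ξ)) * (Complex.I * (N η : ℂ)))) t := by
      have h1 : HasDerivAt (fun s : ℝ => Complex.I * ((N η : ℂ) * s - (N η : ℂ) ^ 2 * ξ)) (Complex.I * (N η : ℂ)) t := by
        have : HasDerivAt (fun s : ℝ => (N η : ℂ) * s - (N η : ℂ) ^ 2 * ξ) (N η : ℂ) t := by
          simpa using ((Complex.ofRealCLM.hasDerivAt (x := t)).const_mul (N η : ℂ)).sub_const ((N η : ℂ) ^ 2 * ξ)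
        simpa using this.const_mul Complex.I
      exact (h1.cexp).const_mul _
    rw [show pt z t ξ η = deriv (fun s : ℝ => (S η : ℂ) * Complex.exp (Complex.I * ((N η : ℂ) * s - (N η : ℂ) ^ 2 * ξ))) t from rfl, h.deriv]
    ring
  have hptt : pt (pt z) t ξ η = (S η : ℂ) * (Complex.I * (N η : ℂ))^2 *
      Complex.exp (Complex.I * ((N η : ℂ) * t - (N η : ℂ) ^ 2 * ξ)) := by
    rw [hpt]
    have h : HasDerivAt (fun s : ℝ => (S η : ℂ) * (Complex.I * (N η : ℂ)) * Complex.exp (Complex.I * ((N η : ℂ) * s - (N η : ℂ) ^ 2 * ξ)))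
        ((S η : ℂ) * (Complex.I * (N η : ℂ)) * (Complex.exp (Complex.I * ((N η : ℂ) * t - (N η : ℂ) ^ 2 * ξ)) * (Complex.I * (N η : ℂ)))) t := by
      have h1 : HasDerivAt (fun s : ℝ => Complex.I * ((N η : ℂ) * s - (N η : ℂ) ^ 2 * ξ)) (Complex.I * (N η : ℂ)) t := by
        have : HasDerivAt (fun s : ℝ => (N η : ℂ) * s - (N η : ℂ) ^ 2 * ξ) (N η : ℂ) t := by
          simpa using ((Complex.ofRealCLM.hasDerivAt (x := t)).const_mul (N η : ℂ)).sub_const ((N η : ℂ) ^ 2 * ξ)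
        simpa using this.const_mul Complex.I
      exact (h1.cexp).const_mul _
    rw [pt]
    rw [h.deriv]
    ring
  have hpx : px z t ξ η = (S η : ℂ) * (-(Complex.I * (N η : ℂ)^2)) *
      Complex.exp (Complex.I * ((N η : ℂ) * t - (N η : ℂ) ^ 2 * ξ)) := by
    have h : HasDerivAt (fun s : ℝ => (S η : ℂ) * Complex.exp (Complex.I * ((N η : ℂ) * t - (N η : ℂ) ^ 2 * s)))
        ((S η : ℂ) * (Complex.exp (Complex.I * ((N η : ℂ) * t - (N η : ℂ) ^ 2 * ξ)) * (-(Complex.I * (N η : ℂ)^2)))) ξ := by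
      have h1 : HasDerivAt (fun s : ℝ => Complex.I * ((N η : ℂ) * t - (N η : ℂ) ^ 2 * s)) (-(Complex.I * (N η : ℂ)^2)) ξ := by
        have : HasDerivAt (fun s : ℝ => (N η : ℂ) * t - (N η : ℂ) ^ 2 * s) (-(N η : ℂ)^2) ξ := by
          simpa using (((Complex.ofRealCLM.hasDerivAt (x := ξ)).const_mul ((N η : ℂ)^2))).const_sub ((N η : ℂ) * t)
        have := this.const_mul Complex.I
        simpa [mul_comm, mul_left_comm, mul_assoc] using this
      exact (h1.cexp).const_mul _
    rw [px, h.deriv]; ring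
  have hNc : HasDerivAt (fun s : ℝ => ((N s : ℂ))) ((deriv N η : ℝ) : ℂ) η :=
    ((hN η).hasDerivAt).ofReal_comp
  have hSc : HasDerivAt (fun s : ℝ => ((S s : ℂ))) ((deriv S η : ℝ) : ℂ) η :=
    ((hS η).hasDerivAt).ofReal_comp
  have hpe : pe z t ξ η = (((deriv S η : ℝ) : ℂ) + (S η : ℂ) * (Complex.I * (((deriv N η : ℝ) : ℂ) * t - 2 * (N η : ℂ) * ((deriv N η : ℝ) : ℂ) * ξ))) *
      Complex.exp (Complex.I * ((N η : ℂ) * t - (N η : ℂ) ^ 2 * ξ)) := by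
    have hg : HasDerivAt (fun s : ℝ => Complex.I * ((N s : ℂ) * t - (N s : ℂ) ^ 2 * ξ))
        (Complex.I * (((deriv N η : ℝ) : ℂ) * t - 2 * (N η : ℂ) * ((deriv N η : ℝ) : ℂ) * ξ)) η := by
      have h2 : HasDerivAt (fun s : ℝ => (N s : ℂ) * t - (N s : ℂ) ^ 2 * ξ)
          (((deriv N η : ℝ) : ℂ) * t - 2 * (N η : ℂ) * ((deriv N η : ℝ) : ℂ) * ξ) η := by
        have ha := hNc.mul_const (t : ℂ)
        have hsq : HasDerivAt (fun s : ℝ => ((N s : ℂ))^2) (((deriv N η : ℝ) : ℂ) * (N η : ℂ) + (N η : ℂ) * ((deriv N η : ℝ) : ℂ)) η := by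
          simp only [pow_two]; exact hNc.mul hNc
        have hb := hsq.mul_const (ξ : ℂ)
        have := ha.sub hb
        exact this.congr_deriv (by ring)
      exact h2.const_mul Complex.I
    have h : HasDerivAt (fun s : ℝ => (S s : ℂ) * Complex.exp (Complex.I * ((N s : ℂ) * t - (N s : ℂ) ^ 2 * ξ)))
        (((deriv S η : ℝ) : ℂ) * Complex.exp (Complex.I * ((N η : ℂ) * t - (N η : ℂ) ^ 2 * ξ)) +
          (S η : ℂ) * (Complex.exp (Complex.I * ((N η : ℂ) * t - (N η : ℂ) ^ 2 * ξ)) * (Complex.I * (((deriv N η : ℝ) : ℂ) * t - 2 * (N η : ℂ) * ((deriv N η : ℝ) : ℂ) * ξ)))) η :=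
      hSc.mul hg.cexp
    rw [pe, h.deriv]; ring
  set E : ℂ := Complex.exp (Complex.I * ((N η : ℂ) * t - (N η : ℂ) ^ 2 * ξ)) with hEdef
  have hconjE : starRingEnd ℂ E = Complex.exp (-(Complex.I * ((N η : ℂ) * t - (N η : ℂ) ^ 2 * ξ))) := by
    rw [hEdef, ← Complex.exp_conj]
    congr 1
    simp [map_mul, map_sub, Complex.conj_I, Complex.conj_ofReal]
  have hE : E * starRingEnd ℂ E = 1 := by
    rw [hconjE, hEdef, ← Complex.exp_add]
    simp
  constructor
  · rw [hpx, hptt]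
    linear_combination (-(S η : ℂ) * (N η : ℂ)^2 * E * Complex.I) * Complex.I_sq
  · rw [hpx, hpe]
    have hcon' : (S η : ℂ) * ((deriv S η : ℝ) : ℂ) * (N η : ℂ)^2 = 1 := by
      exact_mod_cast congrArg (Complex.ofReal) (hcon η)
    simp only [map_mul, map_add, map_sub, map_neg, map_ofNat, Complex.conj_I, Complex.conj_ofReal, map_pow]
    linear_combination ((S η : ℂ) * ((deriv S η : ℝ) : ℂ) * (N η : ℂ)^2) * hE + hcon' + (-((S η : ℂ) * (N η : ℂ)^2 * E * ((deriv S η : ℝ) : ℂ) * starRingEnd ℂ E)) * Complex.I_sq
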